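/- Suppose |Yᵢ| ≤ k₁ almost surely for all i, that 1/pᵢ(e) ≤ k₂ for all i and e ∈ {a, b}, and that P(dᵢ = e, dⱼ = e) > 0 for all i, j and e ∈ {a, b}. Let ε̂ = (1/n)Σᵢ [1{dᵢ=a}εᵢ/pᵢ(a) − 1{dᵢ=b}εᵢ/pᵢ(b)] be the Horvitz–Thompson estimator applied to the specification errors, and for e ∈ {a,b} define D(e) = (1/n²)ΣᵢΣⱼ max(0, E[εᵢεⱼ | dᵢ = e, dⱼ = e]) (the sum ranging over all ordered pairs, including i = j). Then E[ε̂] = 0 and Var(ε̂) ≤ 2k₂(D(a) + D(b)). -/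

import Mathlib

open MeasureTheory ProbabilityTheory Real Finset

/-- The Horvitz–Thompson estimator applied to the specification errors has expectation
zero and its variance is bounded by `2k₂(D(a) + D(b))`, where
`D(e) = (1/n²)ΣᵢΣⱼ [E[εᵢεⱼ | dᵢ = e, dⱼ = e]]⁺`. -/
theorem ht_specification_error_estimator_mean_zero_variance_le
    {Ω : Type*} [MeasurableSpace Ω] (P : Measure Ω) [IsProbabilityMeasure P]
    {Δ : Type*} [Fintype Δ] [DecidableEq Δ] [MeasurableSpace Δ] [MeasurableSingletonClass Δ]
    (n : ℕ) (d : Fin n → Ω → Δ) (Y : Fin n → Ω → ℝ)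
    (hd : ∀ i, Measurable (d i)) (hY : ∀ i, Measurable (Y i))
    (k₁ k₂ : ℝ) (hbdd : ∀ i, ∀ᵐ ω ∂P, |Y i ω| ≤ k₁)
    (a b : Δ)
    -- assignment probabilities `pᵢ(e) = P(dᵢ = e)`
    (p : Fin n → Δ → ℝ) (hp : ∀ i e, p i e = (P {ω | d i ω = e}).toReal)
    -- bounded inverse assignment probabilities for the exposures `a` and `b`
    (hk₂ : ∀ i, ∀ e ∈ ({a, b} : Set Δ), 1 / p i e ≤ k₂)
    -- joint positivity for the exposures `a` and `b`, for all pairs of units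
    (hpos : ∀ i j : Fin n, ∀ e ∈ ({a, b} : Set Δ),
      0 < P ({ω | d i ω = e} ∩ {ω | d j ω = e}))
    -- conditional expected outcomes `ȳᵢ(e) = E[Yᵢ | dᵢ = e]` (zero for null events)
    (ybar : Fin n → Δ → ℝ)
    (hybar : ∀ i e, ybar i e = ∫ ω, Y i ω ∂(P[|{ω | d i ω = e}]))
    -- specification errors `εᵢ = Yᵢ − ȳᵢ(dᵢ)`
    (ε : Fin n → Ω → ℝ)
    (hε : ∀ i ω, ε i ω = Y i ω - ybar i (d i ω))
    -- the truncated error-dependence term `D(e)`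
    (D : Δ → ℝ)
    (hD : ∀ e, D e = (1 / (n : ℝ) ^ 2) * ∑ i, ∑ j,
      max 0 (∫ ω, ε i ω * ε j ω ∂(P[|{ω | d i ω = e} ∩ {ω | d j ω = e}])))
    -- the Horvitz–Thompson estimator applied to the specification errors
    (εhat : Ω → ℝ)
    (hεhat : ∀ ω, εhat ω = (1 / (n : ℝ)) * ∑ i,
      ((if d i ω = a then ε i ω else 0) / p i a - (if d i ω = b then ε i ω else 0) / p i b)) :
    (∫ ω, εhat ω ∂P) = 0 ∧ variance εhat P ≤ 2 * k₂ * (D a + D b) := by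
  classical
  have hab : a ∈ ({a, b} : Set Δ) := Set.mem_insert _ _
  have hbb : b ∈ ({a, b} : Set Δ) := Set.mem_insert_iff.mpr (Or.inr rfl)
  have hmeasg : ∀ (i : Fin n) (g : Δ → ℝ), Measurable fun ω => g (d i ω) := by
    intro i g
    exact Measurable.comp (fun s _ => (Set.toFinite _).measurableSet) (hd i)
  have hcond : ∀ (S : Set Ω) (f : Ω → ℝ),
      ∫ ω, f ω ∂P[|S] = (P S).toReal⁻¹ * ∫ ω in S, f ω ∂P := by
    intro S f
    rw [ProbabilityTheory.cond, integral_smul_measure, ENNReal.toReal_inv, smul_eq_mul]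
  have hInt : ∀ (f : Ω → ℝ) (C : ℝ), Measurable f → (∀ᵐ ω ∂P, |f ω| ≤ C) →
      Integrable f P := by
    intro f C hf hb
    exact memLp_one_iff_integrable.mp <| MemLp.of_bound hf.aestronglyMeasurable C
      (by simpa [Real.norm_eq_abs] using hb)
  have hk₁0 : ∀ (_ : Fin n), 0 ≤ k₁ := by
    intro i
    obtain ⟨ω, hω⟩ := (hbdd i).exists
    exact le_trans (abs_nonneg _) hω
  have hAmeas : ∀ (i : Fin n) (e : Δ), MeasurableSet {ω | d i ω = e} :=
    fun i e => (hd i) (measurableSet_singleton e)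
  -- |ybar| ≤ k₁
  have hybar_bd : ∀ i e, |ybar i e| ≤ k₁ := by
    intro i e
    rw [hybar i e, hcond]
    have h1 : ‖∫ ω in {ω | d i ω = e}, Y i ω ∂P‖
        ≤ k₁ * (P.restrict {ω | d i ω = e} Set.univ).toReal :=
      norm_integral_le_of_norm_le_const (μ := P.restrict {ω | d i ω = e})
        (ae_restrict_of_ae ((hbdd i).mono fun ω h => by
          rw [Real.norm_eq_abs]; exact h))
    rw [Real.norm_eq_abs, Measure.restrict_apply_univ] at h1
    rw [abs_mul, abs_of_nonneg (inv_nonneg.mpr ENNReal.toReal_nonneg)]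
    calc (P {ω | d i ω = e}).toReal⁻¹ * |∫ ω in {ω | d i ω = e}, Y i ω ∂P|
        ≤ (P {ω | d i ω = e}).toReal⁻¹ * (k₁ * (P {ω | d i ω = e}).toReal) :=
          mul_le_mul_of_nonneg_left h1 (inv_nonneg.mpr ENNReal.toReal_nonneg)
      _ ≤ k₁ := by
          rcases eq_or_ne (P {ω | d i ω = e}).toReal 0 with h | h
          · simp [h]
            exact hk₁0 i
          · rw [mul_comm k₁, ← mul_assoc, inv_mul_cancel₀ h, one_mul]
  have hεmeas : ∀ i, Measurable (ε i) := by
    intro i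
    have h : ε i = fun ω => Y i ω - ybar i (d i ω) := funext (hε i)
    rw [h]
    exact (hY i).sub (hmeasg i _)
  have hεbd : ∀ i, ∀ᵐ ω ∂P, |ε i ω| ≤ 2 * k₁ := by
    intro i
    filter_upwards [hbdd i] with ω hω
    rw [hε]
    calc |Y i ω - ybar i (d i ω)| ≤ |Y i ω| + |ybar i (d i ω)| := abs_sub _ _
      _ ≤ k₁ + k₁ := add_le_add hω (hybar_bd i _)
      _ = 2 * k₁ := by ring
  have hPA : ∀ i, ∀ e ∈ ({a, b} : Set Δ), 0 < P {ω | d i ω = e} := by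
    intro i e he
    simpa [Set.inter_self] using hpos i i e he
  have hPAne : ∀ i, ∀ e ∈ ({a, b} : Set Δ), (P {ω | d i ω = e}).toReal ≠ 0 := by
    intro i e he
    exact (ENNReal.toReal_pos (hPA i e he).ne' (measure_ne_top P _)).ne'
  have hppos : ∀ i, ∀ e ∈ ({a, b} : Set Δ), 0 < p i e := by
    intro i e he
    rw [hp]
    exact ENNReal.toReal_pos (hPA i e he).ne' (measure_ne_top P _)
  -- the error has conditional mean zero on the relevant events
  have hsetzero : ∀ i, ∀ e ∈ ({a, b} : Set Δ), ∫ ω in {ω | d i ω = e}, ε i ω ∂P = 0 := by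
    intro i e he
    have hIY : IntegrableOn (Y i) {ω | d i ω = e} P :=
      (hInt (Y i) k₁ (hY i) (hbdd i)).integrableOn
    have hIyb : IntegrableOn (fun ω => ybar i (d i ω)) {ω | d i ω = e} P :=
      (hInt _ k₁ (hmeasg i _)
        (Filter.Eventually.of_forall fun ω => hybar_bd i _)).integrableOn
    have h1 : ∫ ω in {ω | d i ω = e}, ybar i (d i ω) ∂P
        = (P {ω | d i ω = e}).toReal * ybar i e := by
      rw [setIntegral_congr_fun (hAmeas i e)
        (fun ω hω => by simp only [Set.mem_setOf_eq] at hω; rw [hω]),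
        setIntegral_const, smul_eq_mul, measureReal_def]
    have h2 : ∫ ω in {ω | d i ω = e}, Y i ω ∂P
        = (P {ω | d i ω = e}).toReal * ybar i e := by
      have h := hybar i e
      rw [hcond] at h
      rw [h, ← mul_assoc, mul_inv_cancel₀ (hPAne i e he), one_mul]
    calc ∫ ω in {ω | d i ω = e}, ε i ω ∂P
        = ∫ ω in {ω | d i ω = e}, (Y i ω - ybar i (d i ω)) ∂P :=
          setIntegral_congr_fun (hAmeas i e) fun ω _ => hε i ω
      _ = (∫ ω in {ω | d i ω = e}, Y i ω ∂P)
          - ∫ ω in {ω | d i ω = e}, ybar i (d i ω) ∂P := integral_sub hIY hIyb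
      _ = 0 := by rw [h1, h2, sub_self]
  -- basic properties of the HT summands
  have hTmeas : ∀ (i : Fin n) (e : Δ),
      Measurable fun ω => (if d i ω = e then ε i ω else 0) / p i e :=
    fun i e => (Measurable.ite (hAmeas i e) (hεmeas i) measurable_const).div_const _
  have hTbd : ∀ i, ∀ e ∈ ({a, b} : Set Δ),
      ∀ᵐ ω ∂P, |(if d i ω = e then ε i ω else 0) / p i e| ≤ 2 * k₁ / p i e := by
    intro i e he
    have hpe : 0 < p i e := hppos i e he
    filter_upwards [hεbd i] with ω hω
    rw [abs_div, abs_of_pos hpe]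
    have hb : |if d i ω = e then ε i ω else 0| ≤ 2 * k₁ := by
      split_ifs
      · exact hω
      · simp only [abs_zero]
        linarith [hk₁0 i]
    exact div_le_div_of_nonneg_right hb hpe.le
  have hT0 : ∀ i, ∀ e ∈ ({a, b} : Set Δ),
      ∫ ω, (if d i ω = e then ε i ω else 0) / p i e ∂P = 0 := by
    intro i e he
    rw [integral_div]
    have h : (fun ω => if d i ω = e then ε i ω else 0)
        = Set.indicator {ω | d i ω = e} (ε i) := by
      funext ω
      simp [Set.indicator_apply, Set.mem_setOf_eq]
    rw [h, integral_indicator (hAmeas i e), hsetzero i e he, zero_div]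
  have hTint1 : ∀ i, ∀ e ∈ ({a, b} : Set Δ),
      Integrable (fun ω => (if d i ω = e then ε i ω else 0) / p i e) P :=
    fun i e he => hInt _ _ (hTmeas i e) (hTbd i e he)
  have hTmem : ∀ i, ∀ e ∈ ({a, b} : Set Δ),
      MemLp (fun ω => (if d i ω = e then ε i ω else 0) / p i e) 2 P := by
    intro i e he
    exact MemLp.of_bound (hTmeas i e).aestronglyMeasurable _
      ((hTbd i e he).mono fun ω h => by rw [Real.norm_eq_abs]; exact h)
  -- mean zero
  have hεhatfun : εhat = fun ω => (1 / (n : ℝ)) * ∑ i,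
      ((if d i ω = a then ε i ω else 0) / p i a
        - (if d i ω = b then ε i ω else 0) / p i b) := funext hεhat
  have hmean : ∫ ω, εhat ω ∂P = 0 := by
    have hs : ∫ ω, ∑ i, ((if d i ω = a then ε i ω else 0) / p i a
          - (if d i ω = b then ε i ω else 0) / p i b) ∂P
        = ∑ i : Fin n, ∫ ω, ((if d i ω = a then ε i ω else 0) / p i a
          - (if d i ω = b then ε i ω else 0) / p i b) ∂P := by
      apply integral_finset_sum
      intro i _
      exact (hTint1 i a hab).sub (hTint1 i b hbb)
    rw [hεhatfun, integral_const_mul, hs]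
    have h : ∀ i : Fin n, (∫ ω, ((if d i ω = a then ε i ω else 0) / p i a
        - (if d i ω = b then ε i ω else 0) / p i b) ∂P) = 0 := by
      intro i
      rw [integral_sub (hTint1 i a hab) (hTint1 i b hbb), hT0 i a hab, hT0 i b hbb, sub_self]
    rw [Finset.sum_congr rfl fun i _ => h i, Finset.sum_const, smul_zero, mul_zero]
  refine ⟨hmean, ?_⟩
  -- variance
  have hTTint : ∀ e ∈ ({a, b} : Set Δ), ∀ i j : Fin n, Integrable (fun ω =>
      ((if d i ω = e then ε i ω else 0) / p i e)
        * ((if d j ω = e then ε j ω else 0) / p j e)) P := by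
    intro e he i j
    refine hInt _ ((2 * k₁ / p i e) * (2 * k₁ / p j e))
      ((hTmeas i e).mul (hTmeas j e)) ?_
    filter_upwards [hTbd i e he, hTbd j e he] with ω h1 h2
    rw [abs_mul]
    exact mul_le_mul h1 h2 (abs_nonneg _)
      (div_nonneg (by linarith [hk₁0 i]) (hppos i e he).le)
  have hTT : ∀ e ∈ ({a, b} : Set Δ), ∀ i j : Fin n,
      ∫ ω, ((if d i ω = e then ε i ω else 0) / p i e)
          * ((if d j ω = e then ε j ω else 0) / p j e) ∂P
        ≤ k₂ * max 0 (∫ ω, ε i ω * ε j ω ∂P[|{ω | d i ω = e} ∩ {ω | d j ω = e}]) := by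
    intro e he i j
    have hPij : 0 < P ({ω | d i ω = e} ∩ {ω | d j ω = e}) := hpos i j e he
    have htij : (P ({ω | d i ω = e} ∩ {ω | d j ω = e})).toReal ≠ 0 :=
      (ENNReal.toReal_pos hPij.ne' (measure_ne_top P _)).ne'
    have hfun : (fun ω => ((if d i ω = e then ε i ω else 0) / p i e)
          * ((if d j ω = e then ε j ω else 0) / p j e))
        = fun ω => (({ω | d i ω = e} ∩ {ω | d j ω = e}).indicator
            (fun ω => ε i ω * ε j ω) ω) / (p i e * p j e) := by
      funext ω
      rw [div_mul_div_comm]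
      congr 1
      by_cases h1 : d i ω = e <;> by_cases h2 : d j ω = e <;>
        simp [Set.indicator_apply, Set.mem_inter_iff, Set.mem_setOf_eq, h1, h2]
    rw [hfun, integral_div, integral_indicator ((hAmeas i e).inter (hAmeas j e))]
    set c := ∫ ω, ε i ω * ε j ω ∂P[|{ω | d i ω = e} ∩ {ω | d j ω = e}] with hc
    have hIc : ∫ ω in {ω | d i ω = e} ∩ {ω | d j ω = e}, ε i ω * ε j ω ∂P
        = (P ({ω | d i ω = e} ∩ {ω | d j ω = e})).toReal * c := by
      rw [hc, hcond, ← mul_assoc, mul_inv_cancel₀ htij, one_mul]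
    rw [hIc]
    set q := (P ({ω | d i ω = e} ∩ {ω | d j ω = e})).toReal with hq
    have hq0 : 0 ≤ q := ENNReal.toReal_nonneg
    have hqpi : q ≤ p i e := by
      rw [hq, hp]
      exact ENNReal.toReal_mono (measure_ne_top P _) (measure_mono Set.inter_subset_left)
    have hpi := hppos i e he
    have hpj := hppos j e he
    have hm : (0 : ℝ) ≤ max 0 c := le_max_left _ _
    have hnum : q * c ≤ p i e * max 0 c :=
      le_trans (mul_le_mul_of_nonneg_left (le_max_right _ _) hq0)
        (mul_le_mul_of_nonneg_right hqpi hm)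
    calc q * c / (p i e * p j e) ≤ p i e * max 0 c / (p i e * p j e) :=
          div_le_div_of_nonneg_right hnum (mul_pos hpi hpj).le
      _ = max 0 c / p j e := by rw [mul_div_mul_left _ _ hpi.ne']
      _ = 1 / p j e * max 0 c := by ring
      _ ≤ k₂ * max 0 c := mul_le_mul_of_nonneg_right (hk₂ j e he) hm
  have hexp : ∀ e : Δ, (fun ω => (∑ i, (if d i ω = e then ε i ω else 0) / p i e) ^ 2)
      = fun ω => ∑ i, ∑ j, ((if d i ω = e then ε i ω else 0) / p i e)
          * ((if d j ω = e then ε j ω else 0) / p j e) := by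
    intro e
    funext ω
    rw [sq, Finset.sum_mul_sum]
  have hSint : ∀ e ∈ ({a, b} : Set Δ),
      Integrable (fun ω => (∑ i, (if d i ω = e then ε i ω else 0) / p i e) ^ 2) P := by
    intro e he
    rw [hexp e]
    exact integrable_finset_sum _ fun i _ => integrable_finset_sum _ fun j _ => hTTint e he i j
  have hsum : ∀ e ∈ ({a, b} : Set Δ),
      ∫ ω, (∑ i, (if d i ω = e then ε i ω else 0) / p i e) ^ 2 ∂P
        ≤ k₂ * ∑ i, ∑ j,
            max 0 (∫ ω, ε i ω * ε j ω ∂P[|{ω | d i ω = e} ∩ {ω | d j ω = e}]) := by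
    intro e he
    rw [hexp e, integral_finset_sum _
      (fun i _ => integrable_finset_sum _ fun j _ => hTTint e he i j)]
    calc ∑ i, ∫ ω, ∑ j, ((if d i ω = e then ε i ω else 0) / p i e)
            * ((if d j ω = e then ε j ω else 0) / p j e) ∂P
        = ∑ i, ∑ j, ∫ ω, ((if d i ω = e then ε i ω else 0) / p i e)
            * ((if d j ω = e then ε j ω else 0) / p j e) ∂P :=
          Finset.sum_congr rfl fun i _ =>
            integral_finset_sum _ fun j _ => hTTint e he i j
      _ ≤ ∑ i, ∑ j, k₂ * max 0 (∫ ω, ε i ω * ε j ω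
            ∂P[|{ω | d i ω = e} ∩ {ω | d j ω = e}]) :=
          Finset.sum_le_sum fun i _ => Finset.sum_le_sum fun j _ => hTT e he i j
      _ = k₂ * ∑ i, ∑ j, max 0 (∫ ω, ε i ω * ε j ω
            ∂P[|{ω | d i ω = e} ∩ {ω | d j ω = e}]) := by
          rw [Finset.mul_sum]
          exact Finset.sum_congr rfl fun i _ => (Finset.mul_sum _ _ _).symm
  have hmem : MemLp εhat 2 P := by
    rw [hεhatfun]
    apply MemLp.const_mul
    apply memLp_finset_sum
    intro i _
    exact (hTmem i a hab).sub (hTmem i b hbb)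
  have hvar : variance εhat P = ∫ ω, εhat ω ^ 2 ∂P := by
    rw [variance_eq_sub hmem, hmean]
    simp [Pi.pow_apply]
  have hptwise : ∀ ω, εhat ω ^ 2
      ≤ (1 / (n : ℝ) ^ 2) * (2 * (∑ i, (if d i ω = a then ε i ω else 0) / p i a) ^ 2
          + 2 * (∑ i, (if d i ω = b then ε i ω else 0) / p i b) ^ 2) := by
    intro ω
    rw [hεhat, Finset.sum_sub_distrib]
    set x := ∑ i, (if d i ω = a then ε i ω else 0) / p i a
    set z := ∑ i, (if d i ω = b then ε i ω else 0) / p i b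
    have h1 : (x - z) ^ 2 ≤ 2 * x ^ 2 + 2 * z ^ 2 := by nlinarith [sq_nonneg (x + z)]
    calc (1 / (n : ℝ) * (x - z)) ^ 2 = (1 / (n : ℝ) ^ 2) * (x - z) ^ 2 := by ring
      _ ≤ (1 / (n : ℝ) ^ 2) * (2 * x ^ 2 + 2 * z ^ 2) :=
          mul_le_mul_of_nonneg_left h1 (by positivity)
  rw [hvar]
  have hImono : ∫ ω, εhat ω ^ 2 ∂P
      ≤ (1 / (n : ℝ) ^ 2) * (2 * ∫ ω, (∑ i, (if d i ω = a then ε i ω else 0) / p i a) ^ 2 ∂P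
          + 2 * ∫ ω, (∑ i, (if d i ω = b then ε i ω else 0) / p i b) ^ 2 ∂P) := by
    calc ∫ ω, εhat ω ^ 2 ∂P
        ≤ ∫ ω, (1 / (n : ℝ) ^ 2)
            * (2 * (∑ i, (if d i ω = a then ε i ω else 0) / p i a) ^ 2
              + 2 * (∑ i, (if d i ω = b then ε i ω else 0) / p i b) ^ 2) ∂P := by
          refine integral_mono hmem.integrable_sq ?_ hptwise
          exact (((hSint a hab).const_mul 2).add ((hSint b hbb).const_mul 2)).const_mul _
      _ = _ := by
          rw [integral_const_mul,
            integral_add ((hSint a hab).const_mul 2) ((hSint b hbb).const_mul 2),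
            integral_const_mul, integral_const_mul]
  refine hImono.trans ?_
  have hIa := hsum a hab
  have hIb := hsum b hbb
  rw [hD a, hD b]
  set Sa := ∑ i, ∑ j, max 0 (∫ ω, ε i ω * ε j ω
      ∂P[|{ω | d i ω = a} ∩ {ω | d j ω = a}]) with hSa
  set Sb := ∑ i, ∑ j, max 0 (∫ ω, ε i ω * ε j ω
      ∂P[|{ω | d i ω = b} ∩ {ω | d j ω = b}]) with hSb
  calc (1 / (n : ℝ) ^ 2) * (2 * ∫ ω, (∑ i, (if d i ω = a then ε i ω else 0) / p i a) ^ 2 ∂P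
          + 2 * ∫ ω, (∑ i, (if d i ω = b then ε i ω else 0) / p i b) ^ 2 ∂P)
      ≤ (1 / (n : ℝ) ^ 2) * (2 * (k₂ * Sa) + 2 * (k₂ * Sb)) :=
        mul_le_mul_of_nonneg_left (by linarith) (by positivity)
    _ = 2 * k₂ * (1 / (n : ℝ) ^ 2 * Sa + 1 / (n : ℝ) ^ 2 * Sb) := by ring
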